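/- Let Q denote the standard Gaussian tail function. Then the ratio Q(t + log(1/Q(t) − 1)/(2t)) / Q(t) tends to 0 as t → +∞. (This is Proposition 2, part 1: writing P_e = Q(t) for the subchannel error probability and P'_e = Q(t + log(1/P_e − 1)/(2t)) for the probability that the path does not split and the bit is incorrectly decoded, one has P'_e = o(P_e) as P_e → 0⁺.) -/

import Mathlib

open Real Filter Topology

open MeasureTheory Set

lemma integrable_gk : MeasureTheory.Integrable (fun t : ℝ => Real.exp (-t ^ 2 / 2)) := by
  have h := integrable_exp_neg_mul_sq (by norm_num : (0:ℝ) < 1/2)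
  refine h.congr ?_
  filter_upwards with x
  ring_nf

lemma integrable_tgk : MeasureTheory.Integrable (fun t : ℝ => t * Real.exp (-t ^ 2 / 2)) := by
  have h := integrable_mul_exp_neg_mul_sq (by norm_num : (0:ℝ) < 1/2)
  refine h.congr ?_
  filter_upwards with x
  ring_nf

lemma hasDerivAt_negexp (t : ℝ) :
    HasDerivAt (fun t : ℝ => -Real.exp (-t ^ 2 / 2)) (t * Real.exp (-t ^ 2 / 2)) t := by
  have h : HasDerivAt (fun t : ℝ => -t ^ 2 / 2) (-t) t := by
    have := ((hasDerivAt_pow 2 t).neg.div_const 2)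
    simpa using this.congr_deriv (by ring)
  have := (h.exp).neg
  exact this.congr_deriv (by ring)

lemma integral_tgk (x : ℝ) :
    ∫ t in Set.Ioi x, t * Real.exp (-t ^ 2 / 2) = Real.exp (-x ^ 2 / 2) := by
  have h := MeasureTheory.integral_Ioi_of_hasDerivAt_of_tendsto'
    (f := fun t : ℝ => -Real.exp (-t ^ 2 / 2)) (f' := fun t => t * Real.exp (-t ^ 2 / 2))
    (m := 0) (a := x) (fun t _ => hasDerivAt_negexp t) integrable_tgk.integrableOn ?_
  · simpa using h
  · have h1 : Tendsto (fun t : ℝ => -t ^ 2 / 2) atTop atBot := by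
      apply Tendsto.atBot_div_const (by norm_num : (0:ℝ) < 2)
      exact (tendsto_neg_atBot_iff.mpr (tendsto_pow_atTop two_ne_zero))
    have := (Real.tendsto_exp_atBot.comp h1).neg
    simpa using this

lemma gaussI_nonneg (x : ℝ) : 0 ≤ ∫ t in Set.Ioi x, Real.exp (-t ^ 2 / 2) :=
  setIntegral_nonneg measurableSet_Ioi (fun t _ => (Real.exp_pos _).le)

lemma gaussI_anti {a b : ℝ} (h : a ≤ b) :
    (∫ t in Set.Ioi b, Real.exp (-t ^ 2 / 2)) ≤ ∫ t in Set.Ioi a, Real.exp (-t ^ 2 / 2) := by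
  apply setIntegral_mono_set integrable_gk.integrableOn
  · filter_upwards with t using (Real.exp_pos _).le
  · exact HasSubset.Subset.eventuallyLE (Set.Ioi_subset_Ioi h)

lemma gaussI_upper {x : ℝ} (hx : 0 < x) :
    (∫ t in Set.Ioi x, Real.exp (-t ^ 2 / 2)) ≤ Real.exp (-x ^ 2 / 2) / x := by
  have h1 : (∫ t in Set.Ioi x, Real.exp (-t ^ 2 / 2))
      ≤ ∫ t in Set.Ioi x, (t * Real.exp (-t ^ 2 / 2)) / x := by
    apply setIntegral_mono_on integrable_gk.integrableOn
      (integrable_tgk.div_const x).integrableOn measurableSet_Ioi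
    intro t ht
    have htx : x < t := ht
    rw [le_div_iff₀ hx]
    nlinarith [Real.exp_pos (-t ^ 2 / 2)]
  calc (∫ t in Set.Ioi x, Real.exp (-t ^ 2 / 2))
      ≤ ∫ t in Set.Ioi x, (t * Real.exp (-t ^ 2 / 2)) / x := h1
    _ = (∫ t in Set.Ioi x, t * Real.exp (-t ^ 2 / 2)) / x := by
        rw [integral_div]
    _ = Real.exp (-x ^ 2 / 2) / x := by rw [integral_tgk]

lemma gaussI_lower {x : ℝ} (hx : 1 ≤ x) :
    Real.exp (-3/2) * Real.exp (-x ^ 2 / 2) / x ≤ ∫ t in Set.Ioi x, Real.exp (-t ^ 2 / 2) := by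
  have hx0 : 0 < x := lt_of_lt_of_le one_pos hx
  have hle : x ≤ x + 1 / x := le_add_of_nonneg_right (by positivity)
  have h1 : (∫ t in Set.Ioc x (x + 1/x), Real.exp (-t ^ 2 / 2))
      ≤ ∫ t in Set.Ioi x, Real.exp (-t ^ 2 / 2) := by
    apply setIntegral_mono_set integrable_gk.integrableOn
    · filter_upwards with t using (Real.exp_pos _).le
    · exact HasSubset.Subset.eventuallyLE Set.Ioc_subset_Ioi_self
  refine le_trans ?_ h1
  have h2 : (∫ t in Set.Ioc x (x + 1/x), Real.exp (-t ^ 2 / 2))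
      = ∫ t in x..(x + 1/x), Real.exp (-t ^ 2 / 2) := by
    rw [intervalIntegral.integral_of_le hle]
  rw [h2]
  have h3 : (∫ t in x..(x + 1/x), Real.exp (-(x + 1/x) ^ 2 / 2))
      ≤ ∫ t in x..(x + 1/x), Real.exp (-t ^ 2 / 2) := by
    apply intervalIntegral.integral_mono_on hle (intervalIntegrable_const)
      (integrable_gk.intervalIntegrable)
    intro t ht
    apply Real.exp_le_exp.mpr
    have h4 : t ≤ x + 1/x := ht.2
    have h5 : x ≤ t := ht.1
    nlinarith
  refine le_trans ?_ h3
  rw [intervalIntegral.integral_const, smul_eq_mul]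
  have key : Real.exp (-3/2) * Real.exp (-x ^ 2 / 2) ≤ Real.exp (-(x + 1/x) ^ 2 / 2) := by
    rw [← Real.exp_add]
    apply Real.exp_le_exp.mpr
    have h6 : (1:ℝ) ≤ x ^ 2 := one_le_pow₀ hx
    have hexp : (x + 1/x) ^ 2 = x ^ 2 + 2 + 1 / x ^ 2 := by
      field_simp; ring
    rw [hexp]
    have : 1 / x ^ 2 ≤ 1 := by
      rw [div_le_one (by positivity)]; exact h6
    linarith
  calc Real.exp (-3/2) * Real.exp (-x ^ 2 / 2) / x
      = (1/x) * (Real.exp (-3/2) * Real.exp (-x ^ 2 / 2)) := by ring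
    _ ≤ (1/x) * Real.exp (-(x + 1/x) ^ 2 / 2) :=
        mul_le_mul_of_nonneg_left key (by positivity)
    _ = (x + 1/x - x) * Real.exp (-(x + 1/x) ^ 2 / 2) := by ring_nf

/-- The standard Gaussian tail function `Q(x) = (1/√(2π)) ∫_x^∞ e^{−t²/2} dt`. -/
noncomputable def gaussQ (x : ℝ) : ℝ :=
  (1 / Real.sqrt (2 * Real.pi)) * ∫ t in Set.Ioi x, Real.exp (-t ^ 2 / 2)

lemma c_pos : 0 < 1 / Real.sqrt (2 * Real.pi) := by
  positivity

lemma c_le_one : 1 / Real.sqrt (2 * Real.pi) ≤ 1 := by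
  rw [div_le_one (by positivity)]
  have h : (1:ℝ) ≤ 2 * Real.pi := by nlinarith [Real.pi_gt_three]
  nlinarith [Real.sq_sqrt (by positivity : (0:ℝ) ≤ 2 * Real.pi),
    Real.sqrt_nonneg (2 * Real.pi)]

lemma gaussQ_nonneg (x : ℝ) : 0 ≤ gaussQ x :=
  mul_nonneg c_pos.le (gaussI_nonneg x)

lemma gaussQ_pos {x : ℝ} (hx : 1 ≤ x) : 0 < gaussQ x := by
  have h := gaussI_lower hx
  have : (0:ℝ) < Real.exp (-3/2) * Real.exp (-x ^ 2 / 2) / x := by positivity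
  exact mul_pos c_pos (lt_of_lt_of_le this h)

/-- Proposition 2, part 1: `Q(t + log(1/Q(t) − 1)/(2t)) / Q(t) → 0` as `t → +∞`. -/
theorem gaussQ_ratio_tendsto_zero :
    Tendsto (fun t : ℝ =>
        gaussQ (t + Real.log (1 / gaussQ t - 1) / (2 * t)) / gaussQ t)
      atTop (𝓝 0) := by
  set c := 1 / Real.sqrt (2 * Real.pi) with hc
  have hg : Tendsto (fun t : ℝ => Real.exp 1 * Real.exp (-t)) atTop (𝓝 0) := by
    simpa using (Real.tendsto_exp_neg_atTop_nhds_zero).const_mul (Real.exp 1)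
  apply tendsto_of_tendsto_of_tendsto_of_le_of_le' tendsto_const_nhds hg
  · filter_upwards with t
    exact div_nonneg (gaussQ_nonneg _) (gaussQ_nonneg _)
  · filter_upwards [eventually_ge_atTop (5:ℝ)] with t ht
    have ht1 : (1:ℝ) ≤ t := by linarith
    have ht0 : (0:ℝ) < t := by linarith
    have hQpos : 0 < gaussQ t := gaussQ_pos ht1
    -- Step 1: gaussQ t is small: gaussQ t ≤ exp (-t^2/2)
    have hQle : gaussQ t ≤ Real.exp (-t ^ 2 / 2) := by
      have h1 : gaussQ t ≤ c * (Real.exp (-t ^ 2 / 2) / t) :=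
        mul_le_mul_of_nonneg_left (gaussI_upper ht0) c_pos.le
      have h2 : c * (Real.exp (-t ^ 2 / 2) / t) ≤ 1 * (Real.exp (-t ^ 2 / 2) / 1) := by
        apply mul_le_mul c_le_one _ (by positivity) zero_le_one
        gcongr <;> linarith
      simpa using h1.trans h2
    -- Step 2: exp (2t) ≤ 1/gaussQ t − 1
    have hbig : Real.exp (2 * t) ≤ 1 / gaussQ t - 1 := by
      have hkey : Real.exp (-t ^ 2 / 2) * (Real.exp (2 * t) + 1) ≤ 1 := by
        have h2 : Real.exp (2 * t) + 1 ≤ Real.exp (2 * t + 1) := by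
          rw [Real.exp_add]
          nlinarith [Real.exp_pos (2 * t), Real.exp_one_gt_d9, Real.add_one_le_exp (2 * t)]
        have h3 : Real.exp (2 * t + 1) ≤ Real.exp (t ^ 2 / 2) := by
          apply Real.exp_le_exp.mpr; nlinarith
        calc Real.exp (-t ^ 2 / 2) * (Real.exp (2 * t) + 1)
            ≤ Real.exp (-t ^ 2 / 2) * Real.exp (t ^ 2 / 2) :=
              mul_le_mul_of_nonneg_left (h2.trans h3) (Real.exp_pos _).le
          _ = 1 := by rw [← Real.exp_add]; ring_nf; exact Real.exp_zero
      have h4 : gaussQ t * (Real.exp (2 * t) + 1) ≤ 1 := by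
        calc gaussQ t * (Real.exp (2 * t) + 1)
            ≤ Real.exp (-t ^ 2 / 2) * (Real.exp (2 * t) + 1) :=
              mul_le_mul_of_nonneg_right hQle (by positivity)
          _ ≤ 1 := hkey
      have h5 : Real.exp (2 * t) + 1 ≤ 1 / gaussQ t := by
        rw [le_div_iff₀ hQpos]; linarith [mul_comm (gaussQ t) (Real.exp (2 * t) + 1)] 
      linarith
    -- Step 3: the shift is at least 1
    set δ := Real.log (1 / gaussQ t - 1) / (2 * t) with hδdef
    have hδ : 1 ≤ δ := by
      rw [hδdef, le_div_iff₀ (by linarith : (0:ℝ) < 2 * t), one_mul]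
      calc 2 * t = Real.log (Real.exp (2 * t)) := (Real.log_exp _).symm
        _ ≤ Real.log (1 / gaussQ t - 1) := Real.log_le_log (Real.exp_pos _) hbig
    -- Step 4: bound the ratio
    rw [div_le_iff₀ hQpos]
    have hnum : gaussQ (t + δ) ≤ c * (Real.exp (-(t+1) ^ 2 / 2) / (t+1)) := by
      have h1 : gaussQ (t + δ) ≤ gaussQ (t + 1) :=
        mul_le_mul_of_nonneg_left (gaussI_anti (by linarith)) c_pos.le
      exact h1.trans (mul_le_mul_of_nonneg_left (gaussI_upper (by linarith)) c_pos.le)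
    have hden : c * (Real.exp (-3/2) * Real.exp (-t ^ 2 / 2) / t) ≤ gaussQ t :=
      mul_le_mul_of_nonneg_left (gaussI_lower ht1) c_pos.le
    have hE : Real.exp 1 * Real.exp (-t) * (Real.exp (-3/2) * Real.exp (-t ^ 2 / 2))
        = Real.exp (-(t+1) ^ 2 / 2) := by
      rw [← Real.exp_add, ← Real.exp_add, ← Real.exp_add]
      congr 1; ring
    calc gaussQ (t + δ) ≤ c * (Real.exp (-(t+1) ^ 2 / 2) / (t+1)) := hnum
      _ ≤ c * (Real.exp (-(t+1) ^ 2 / 2) / t) := by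
          apply mul_le_mul_of_nonneg_left _ c_pos.le
          gcongr <;> linarith
      _ = Real.exp 1 * Real.exp (-t) * (c * (Real.exp (-3/2) * Real.exp (-t ^ 2 / 2) / t)) := by
          rw [← hE]; ring
      _ ≤ Real.exp 1 * Real.exp (-t) * gaussQ t :=
          mul_le_mul_of_nonneg_left hden (by positivity)
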